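/- Let l, m, n, A, B, α, a, b be real with α ≠ 0, b ≠ 1, l ≠ 0. Suppose y : ℝ → ℝ is differentiable, positive, with positive derivative, satisfying (y'(x))^l = A·y(x)^m + B·y(x)^n for all x, with the right-hand side positive. Let Y and s be defined by Y(s(x)) = y(x)^α with s'(x) = α·y(x)^a·y'(x)^b (i.e., the β = 0 GST with Λ = α⁻¹), with s strictly monotone. Then Y satisfies (dY/ds)^L = A·Y^M + B·Y^N with L = l/(1-b), M = m/α + l(α - a - 1)/(α(1-b)), N = n/α + l(α - a - 1)/(α(1-b)). -/

import Mathlib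

theorem stmt7 (l m n A B α a b : ℝ) (hα : α ≠ 0) (hb : b ≠ 1) (hl : l ≠ 0)
    (y y' s Y Ydot : ℝ → ℝ)
    (hy : ∀ x, HasDerivAt y (y' x) x)
    (hypos : ∀ x, 0 < y x) (hy'pos : ∀ x, 0 < y' x)
    (hODE : ∀ x, y' x ^ l = A * y x ^ m + B * y x ^ n)
    (hrhs : ∀ x, 0 < A * y x ^ m + B * y x ^ n)
    (hs : ∀ x, HasDerivAt s (α * y x ^ a * y' x ^ b) x)
    (hmono : StrictMono s ∨ StrictAnti s)
    (hY : ∀ x, Y (s x) = y x ^ α)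
    (hYd : ∀ x, HasDerivAt Y (Ydot (s x)) (s x)) :
    ∀ x, Ydot (s x) ^ (l / (1 - b)) =
      A * Y (s x) ^ (m / α + l * (α - a - 1) / (α * (1 - b))) +
      B * Y (s x) ^ (n / α + l * (α - a - 1) / (α * (1 - b))) := by
  intro x
  have hyx := hypos x
  have hy'x := hy'pos x
  have hb1 : (1 : ℝ) - b ≠ 0 := sub_ne_zero.mpr (Ne.symm hb)
  have hcomp : HasDerivAt (fun t => Y (s t)) (Ydot (s x) * (α * y x ^ a * y' x ^ b)) x :=
    (hYd x).comp x (hs x)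
  have hfun : (fun t => Y (s t)) = fun t => y t ^ α := funext hY
  rw [hfun] at hcomp
  have hpow : HasDerivAt (fun t => y t ^ α) (y' x * α * y x ^ (α - 1)) x :=
    (hy x).rpow_const (Or.inl hyx.ne')
  have heq : Ydot (s x) * (α * y x ^ a * y' x ^ b) = y' x * α * y x ^ (α - 1) :=
    hcomp.unique hpow
  have hc : α * y x ^ a * y' x ^ b ≠ 0 := by
    exact mul_ne_zero (mul_ne_zero hα (Real.rpow_pos_of_pos hyx a).ne')
      (Real.rpow_pos_of_pos hy'x b).ne'
  have hYdot : Ydot (s x) = y x ^ (α - 1 - a) * y' x ^ (1 - b) := by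
    apply mul_right_cancel₀ hc
    rw [heq]
    symm
    have e1 : y x ^ (α - 1 - a) * y x ^ a = y x ^ (α - 1) := by
      rw [← Real.rpow_add hyx]; ring_nf
    have e2 : y' x ^ (1 - b) * y' x ^ b = y' x := by
      rw [← Real.rpow_add hy'x]; simp
    calc y x ^ (α - 1 - a) * y' x ^ (1 - b) * (α * y x ^ a * y' x ^ b)
        = α * (y x ^ (α - 1 - a) * y x ^ a) * (y' x ^ (1 - b) * y' x ^ b) := by ring
      _ = y' x * α * y x ^ (α - 1) := by rw [e1, e2]; ring
  have hYval := hY x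
  set K : ℝ := (α - 1 - a) * (l / (1 - b)) with hK
  have hexp : ∀ p : ℝ, Y (s x) ^ (p / α + l * (α - a - 1) / (α * (1 - b))) = y x ^ (p + K) := by
    intro p
    rw [hYval, ← Real.rpow_mul hyx.le]
    congr 1
    field_simp [hK]
    have h2 : (1 - b) * K = (α - 1 - a) * l := by
      rw [hK, mul_comm, mul_assoc, div_mul_cancel₀ l hb1]
    linear_combination -h2
  have hLHS : Ydot (s x) ^ (l / (1 - b)) = y x ^ K * y' x ^ l := by
    rw [hYdot, Real.mul_rpow (Real.rpow_pos_of_pos hyx _).le (Real.rpow_pos_of_pos hy'x _).le,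
      ← Real.rpow_mul hyx.le, ← Real.rpow_mul hy'x.le, ← hK]
    congr 2
    field_simp
  rw [hLHS, hODE x, hexp m, hexp n, Real.rpow_add hyx, Real.rpow_add hyx]
  ring
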